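/- Fix a constant ε ∈ (0,1). For all sufficiently large n (depending on ε) the following holds. Let f : {1,…,n} → ℝ take at most ℓ ≤ n^{1−ε} distinct values, let v ∈ ℝ, and suppose the set S₀ = {i : f(i) ≥ v} has |S₀| ≤ n^{ε/3}. Then {1,…,n} can be partitioned into: the set S₀; buckets S₁,…,S_{ℓ₃} such that f is constant on each S_j with value strictly less than v and each bucket size |S_j| lies in [n^{ε/2}/10, 2·n^{ε/2}/10], with total bucket size Σ_{j=1}^{ℓ₃} |S_j| in the interval [n/9, n/8]; and a residual set R with |R| ≥ n/4. -/

import Mathlib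

open Finset

lemma extract_aux {α β : Type*} [DecidableEq α] [DecidableEq β] (f : α → β) (b : ℕ) (hb : 0 < b) :
    ∀ (m : ℕ) (L : Finset α), m * b + (L.image f).card * b ≤ L.card →
    ∃ S : Fin m → Finset α, (∀ j, S j ⊆ L) ∧ (∀ j, (S j).card = b) ∧
      (∀ j, ∃ c, ∀ i ∈ S j, f i = c) ∧ (∀ j j', j ≠ j' → Disjoint (S j) (S j')) := by
  intro m
  induction m with
  | zero =>
    intro L _
    exact ⟨fun j => j.elim0, fun j => j.elim0, fun j => j.elim0, fun j => j.elim0, fun j j' => j.elim0⟩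
  | succ m ih =>
    intro L h
    have hLsum : L.card = ∑ t ∈ L.image f, (L.filter fun a => f a = t).card :=
      card_eq_sum_card_fiberwise (fun x hx => mem_image_of_mem f hx)
    have hex : ∃ t ∈ L.image f, b ≤ (L.filter fun a => f a = t).card := by
      by_contra hc
      push_neg at hc
      obtain ⟨b', rfl⟩ := Nat.exists_eq_succ_of_ne_zero hb.ne'
      simp only [Nat.succ_eq_add_one] at h hc
      have h1 : L.card ≤ (L.image f).card * b' := by
        rw [hLsum]
        calc ∑ t ∈ L.image f, (L.filter fun a => f a = t).card
            ≤ ∑ _t ∈ L.image f, b' := Finset.sum_le_sum (fun t ht => Nat.lt_succ_iff.mp (hc t ht))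
          _ = (L.image f).card * b' := by rw [Finset.sum_const, smul_eq_mul]
      have h4 : (L.image f).card * (b' + 1) = (L.image f).card * b' + (L.image f).card := by ring
      have h5 : (m + 1) * (b' + 1) = m * (b' + 1) + b' + 1 := by ring
      omega
    obtain ⟨t, _, hft⟩ := hex
    obtain ⟨T, hTsub, hTcard⟩ := Finset.exists_subset_card_eq hft
    have hTL : T ⊆ L := hTsub.trans (filter_subset _ _)
    have hL'card : (L \ T).card = L.card - b := by
      rw [card_sdiff_of_subset hTL, hTcard]
    have himg : ((L \ T).image f).card ≤ (L.image f).card :=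
      card_le_card (image_subset_image sdiff_subset)
    have hrec : m * b + ((L \ T).image f).card * b ≤ (L \ T).card := by
      have h2 : ((L \ T).image f).card * b ≤ (L.image f).card * b := Nat.mul_le_mul_right _ himg
      have h5 : (m + 1) * b = m * b + b := by ring
      omega
    obtain ⟨S', hS'sub, hS'card, hS'mono, hS'disj⟩ := ih (L \ T) hrec
    have hdTS : ∀ k, Disjoint T (S' k) :=
      fun k => Disjoint.mono_right (hS'sub k) Finset.disjoint_sdiff
    refine ⟨Fin.cons T S', ?_, ?_, ?_, ?_⟩
    · intro j
      refine Fin.cases ?_ (fun k => ?_) j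
      · simpa using hTL
      · simpa using (hS'sub k).trans sdiff_subset
    · intro j
      refine Fin.cases ?_ (fun k => ?_) j
      · simpa using hTcard
      · simpa using hS'card k
    · intro j
      refine Fin.cases ?_ (fun k => ?_) j
      · exact ⟨t, fun i hi => (mem_filter.mp (hTsub (by simpa using hi))).2⟩
      · obtain ⟨c, hc⟩ := hS'mono k
        exact ⟨c, fun i hi => hc i (by simpa using hi)⟩
    · intro j j'
      refine Fin.cases ?_ (fun k => ?_) j
      · refine Fin.cases ?_ (fun k' => ?_) j' <;> intro hne
        · exact absurd rfl hne
        · simpa using hdTS k'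
      · refine Fin.cases ?_ (fun k' => ?_) j' <;> intro hne
        · simpa using (hdTS k).symm
        · have hkk : k ≠ k' := fun hkk => hne (by rw [hkk])
          simpa using hS'disj k k' hkk

theorem stmt_4 (ε : ℝ) (hε0 : 0 < ε) (hε1 : ε < 1) :
    ∃ N : ℕ, ∀ n : ℕ, N ≤ n → ∀ f : Fin n → ℝ, ∀ v : ℝ,
    ((Finset.univ.image f).card : ℝ) ≤ (n : ℝ) ^ ((1 : ℝ) - ε) →
    ((Finset.univ.filter (fun i => v ≤ f i)).card : ℝ) ≤ (n : ℝ) ^ (ε / 3) →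
    ∃ (ℓ₃ : ℕ) (S : Fin ℓ₃ → Finset (Fin n)) (R : Finset (Fin n)),
      (∀ j, Disjoint (Finset.univ.filter (fun i => v ≤ f i)) (S j)) ∧
      Disjoint (Finset.univ.filter (fun i => v ≤ f i)) R ∧
      (∀ j, Disjoint (S j) R) ∧
      (∀ j j', j ≠ j' → Disjoint (S j) (S j')) ∧
      (Finset.univ.filter (fun i => v ≤ f i)) ∪ R ∪ Finset.univ.biUnion S = Finset.univ ∧
      (∀ j, ∃ c : ℝ, c < v ∧ ∀ i ∈ S j, f i = c) ∧
      (∀ j, (n : ℝ) ^ (ε / 2) / 10 ≤ ((S j).card : ℝ) ∧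
        ((S j).card : ℝ) ≤ 2 * (n : ℝ) ^ (ε / 2) / 10) ∧
      (n : ℝ) / 9 ≤ (∑ j, ((S j).card : ℝ)) ∧
      (∑ j, ((S j).card : ℝ)) ≤ (n : ℝ) / 8 ∧
      (n : ℝ) / 4 ≤ (R.card : ℝ) := by
  have hεne : ε ≠ 0 := ne_of_gt hε0
  refine ⟨max (⌈(100:ℝ) ^ (2/ε)⌉₊) 10000, ?_⟩
  intro n hn f v hℓ hS0
  set x : ℝ := (n : ℝ) with hxdef
  have hn1 : (10000:ℕ) ≤ n := le_trans (le_max_right _ _) hn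
  have hx4 : (10000:ℝ) ≤ x := by rw [hxdef]; exact_mod_cast hn1
  have hx0 : (0:ℝ) < x := by linarith
  have hx1 : (1:ℝ) ≤ x := by linarith
  have hbase : (100:ℝ) ^ (2/ε) ≤ x := by
    refine le_trans (Nat.le_ceil _) ?_
    rw [hxdef]; exact_mod_cast le_trans (le_max_left _ _) hn
  have hA100 : (100:ℝ) ≤ x ^ (ε/2) := by
    have h1 : ((100:ℝ) ^ (2/ε)) ^ (ε/2) ≤ x ^ (ε/2) :=
      Real.rpow_le_rpow (Real.rpow_nonneg (by norm_num) _) hbase (by positivity)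
    have h2 : ((100:ℝ) ^ (2/ε)) ^ (ε/2) = 100 := by
      rw [← Real.rpow_mul (by norm_num), show (2/ε) * (ε/2) = 1 by field_simp, Real.rpow_one]
    linarith
  have hhalf : x ^ ((1:ℝ)/2) ≤ x / 100 := by
    have hsq : x ^ ((1:ℝ)/2) * x ^ ((1:ℝ)/2) = x := by
      rw [← Real.rpow_add hx0]; norm_num
    have h100 : (100:ℝ) ≤ x ^ ((1:ℝ)/2) := by
      have h1 : ((10000:ℝ)) ^ ((1:ℝ)/2) ≤ x ^ ((1:ℝ)/2) :=
        Real.rpow_le_rpow (by norm_num) hx4 (by norm_num)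
      have h2 : ((10000:ℝ)) ^ ((1:ℝ)/2) = 100 := by
        rw [show (10000:ℝ) = 100 ^ (2:ℕ) by norm_num, ← Real.rpow_natCast 100 2,
          ← Real.rpow_mul (by norm_num)]
        norm_num
      linarith
    nlinarith [Real.rpow_nonneg hx0.le ((1:ℝ)/2)]
  have hpow_le : ∀ e : ℝ, e ≤ 1/2 → x ^ e ≤ x / 100 := fun e he =>
    le_trans (Real.rpow_le_rpow_of_exponent_le hx1 he) hhalf
  have hA_le : x ^ (ε/2) ≤ x / 100 := hpow_le _ (by linarith)
  have hS0' : ((Finset.univ.filter (fun i => v ≤ f i)).card : ℝ) ≤ x / 100 :=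
    le_trans hS0 (hpow_le _ (by linarith))
  have h1eps : x ^ ((1:ℝ) - ε) * x ^ (ε/2) ≤ x / 100 := by
    have h2 : x ^ ((1:ℝ) - ε) * x ^ (ε/2) = x ^ (1 - ε/2) := by
      rw [← Real.rpow_add hx0]; congr 1; ring
    have h3 : x ^ (1 - ε/2) * x ^ (ε/2) = x := by
      rw [← Real.rpow_add hx0]; norm_num
    have h4 : x ^ (1 - ε/2) * 100 ≤ x := by
      calc x ^ (1 - ε/2) * 100 ≤ x ^ (1 - ε/2) * x ^ (ε/2) :=
            mul_le_mul_of_nonneg_left hA100 (Real.rpow_nonneg hx0.le _)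
        _ = x := h3
    rw [h2]; linarith
  set A := x ^ (ε/2) with hAdef
  set b : ℕ := ⌈A/10⌉₊ with hbdef
  have hb_lb : A/10 ≤ (b:ℝ) := Nat.le_ceil _
  have hb_ub : (b:ℝ) ≤ A/10 + 1 := le_of_lt (Nat.ceil_lt_add_one (by positivity))
  have hb_ub2 : (b:ℝ) ≤ A/5 := by linarith
  have hb0 : 0 < b := Nat.ceil_pos.mpr (by linarith)
  have hb0' : (0:ℝ) < (b:ℝ) := by exact_mod_cast hb0
  have hbx : (b:ℝ) ≤ x/500 := by linarith
  set m : ℕ := ⌈x/(9*(b:ℝ))⌉₊ with hmdef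
  have hm_lb : x/(9*(b:ℝ)) ≤ (m:ℝ) := Nat.le_ceil _
  have hm_ub : (m:ℝ) ≤ x/(9*(b:ℝ)) + 1 := le_of_lt (Nat.ceil_lt_add_one (by positivity))
  have hdivmul : x/(9*(b:ℝ)) * (b:ℝ) = x/9 := by field_simp
  have hmb_lb : x/9 ≤ (m:ℝ)*(b:ℝ) := by
    have := mul_le_mul_of_nonneg_right hm_lb hb0'.le
    rw [hdivmul] at this; exact this
  have hmb_ub : (m:ℝ)*(b:ℝ) ≤ x/9 + (b:ℝ) := by
    have := mul_le_mul_of_nonneg_right hm_ub hb0'.le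
    rw [add_mul, hdivmul, one_mul] at this; exact this
  set S0 := Finset.univ.filter (fun i => v ≤ f i) with hS0def
  set L := Finset.univ.filter (fun i => ¬ v ≤ f i) with hLdef
  have hcardsum : S0.card + L.card = n := by
    rw [hS0def, hLdef, Finset.card_filter_add_card_filter_not, card_univ, Fintype.card_fin]
  have hLcard : (L.card : ℝ) = x - (S0.card : ℝ) := by
    have : ((S0.card : ℕ) : ℝ) + ((L.card : ℕ) : ℝ) = x := by rw [hxdef]; exact_mod_cast hcardsum
    linarith
  have hLimg : ((L.image f).card : ℝ) ≤ x ^ ((1:ℝ) - ε) := by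
    refine le_trans ?_ hℓ
    exact_mod_cast card_le_card (image_subset_image (filter_subset _ _))
  have hhyp : m * b + (L.image f).card * b ≤ L.card := by
    have hcast : ((m * b + (L.image f).card * b : ℕ) : ℝ) ≤ (L.card : ℝ) := by
      push_cast
      have h1 : ((L.image f).card : ℝ) * (b:ℝ) ≤ x ^ ((1:ℝ) - ε) * (A/5) :=
        mul_le_mul hLimg hb_ub2 hb0'.le (Real.rpow_nonneg hx0.le _)
      have h2 : x ^ ((1:ℝ) - ε) * (A/5) = (x ^ ((1:ℝ) - ε) * A) / 5 := by ring
      linarith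
    exact_mod_cast hcast
  obtain ⟨S, hsub, hcard, hmono, hdisj⟩ := extract_aux f b hb0 m L hhyp
  have hbiU : (univ.biUnion S).card = ∑ j, (S j).card :=
    card_biUnion (fun j _ k _ hjk => hdisj j k hjk)
  set X := S0 ∪ univ.biUnion S with hXdef
  refine ⟨m, S, univ \ X, ?_, ?_, ?_, hdisj, ?_, ?_, ?_, ?_, ?_, ?_⟩
  · intro j
    exact Disjoint.mono_right (hsub j) (disjoint_filter_filter_not univ univ _)
  · exact Disjoint.mono_left subset_union_left Finset.disjoint_sdiff
  · intro j
    exact Disjoint.mono_left ((subset_biUnion_of_mem S (mem_univ j)).trans subset_union_right)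
      Finset.disjoint_sdiff
  · ext i
    simp only [hXdef, mem_union, mem_sdiff, mem_univ, iff_true, true_and]
    tauto
  · intro j
    obtain ⟨c, hc⟩ := hmono j
    have hne : (S j).Nonempty := card_pos.mp (by rw [hcard j]; exact hb0)
    obtain ⟨i0, hi0⟩ := hne
    have hiL := hsub j hi0
    rw [hLdef, mem_filter] at hiL
    exact ⟨c, by rw [← hc i0 hi0]; exact lt_of_not_ge hiL.2, hc⟩
  · intro j
    rw [hcard j]
    constructor
    · exact hb_lb
    · linarith
  · have hsum : ∑ j, ((S j).card : ℝ) = (m:ℝ) * (b:ℝ) := by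
      simp [hcard, Finset.sum_const, Finset.card_univ, mul_comm]
    rw [hsum]; exact hmb_lb
  · have hsum : ∑ j, ((S j).card : ℝ) = (m:ℝ) * (b:ℝ) := by
      simp [hcard, Finset.sum_const, Finset.card_univ, mul_comm]
    rw [hsum]; linarith
  · have hXn : X.card ≤ n := by simpa using Finset.card_le_univ X
    have hRcard : ((univ \ X).card : ℝ) = x - (X.card : ℝ) := by
      rw [card_sdiff_of_subset (subset_univ _), card_univ, Fintype.card_fin, Nat.cast_sub hXn]
    have hsumN : ((∑ j, (S j).card : ℕ) : ℝ) = (m:ℝ) * (b:ℝ) := by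
      push_cast
      simp [hcard, Finset.sum_const, Finset.card_univ, mul_comm]
    have hXcard : (X.card : ℝ) ≤ x/100 + (m:ℝ)*(b:ℝ) := by
      have h1 : X.card ≤ S0.card + (univ.biUnion S).card := card_union_le _ _
      have h2 : ((X.card : ℕ) : ℝ) ≤ (S0.card : ℝ) + ((∑ j, (S j).card : ℕ) : ℝ) := by
        rw [← hbiU]; exact_mod_cast h1
      rw [hsumN] at h2
      linarith
    rw [hRcard]
    linarith
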